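/- The non-overlapped frequency of a serial episode is at most its minimal-occurrence frequency: f_no(α) ≤ f_mi(α). -/

import Mathlib

variable {A : Type}

/-- An occurrence of the (N+1)-node serial episode `α` in the event sequence
`E` (of length `n`): a strictly increasing index map matching the event-types. -/
def IsOcc (E : ℕ → A) (n : ℕ) {N : ℕ} (α : Fin (N+1) → A) (h : Fin (N+1) → ℕ) : Prop :=
  StrictMono h ∧ (∀ i, h i < n) ∧ (∀ i, E (h i) = α i)

/-- Earliest transiting occurrence: each `h i.succ` is the least index after
`h i.castSucc` carrying event-type `α i.succ`. -/
def IsET (E : ℕ → A) (n : ℕ) {N : ℕ} (α : Fin (N+1) → A) (h : Fin (N+1) → ℕ) : Prop :=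
  IsOcc E n α h ∧ ∀ (i : Fin N) (j : ℕ), h i.castSucc < j → E j = α i.succ → h i.succ ≤ j

/-- Lexicographic order on occurrences. -/
def OccLex {N : ℕ} (h1 h2 : Fin (N+1) → ℕ) : Prop :=
  ∃ i, (∀ k < i, h1 k = h2 k) ∧ h1 i < h2 i

/-- The window `[a, b]` contains an occurrence of `α`. -/
def WindowHasOcc (E : ℕ → A) (n : ℕ) {N : ℕ} (α : Fin (N+1) → A) (a b : ℕ) : Prop :=
  ∃ h, IsOcc E n α h ∧ a ≤ h 0 ∧ h (Fin.last N) ≤ b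

/-- `[a, b]` is a minimal window of `α`: it contains an occurrence and no
proper subwindow contains one. -/
def IsMinWindow (E : ℕ → A) (n : ℕ) {N : ℕ} (α : Fin (N+1) → A) (a b : ℕ) : Prop :=
  WindowHasOcc E n α a b ∧
    ∀ c d, a ≤ c → d ≤ b → (a < c ∨ d < b) → ¬ WindowHasOcc E n α c d

/-- A minimal occurrence: its window is a minimal window. -/
def IsMinOcc (E : ℕ → A) (n : ℕ) {N : ℕ} (α : Fin (N+1) → A) (h : Fin (N+1) → ℕ) : Prop :=
  IsOcc E n α h ∧ IsMinWindow E n α (h 0) (h (Fin.last N))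

/-- `h'` is the earliest transiting occurrence immediately following `h`
in the lexicographic enumeration of earliest transiting occurrences. -/
def NextET (E : ℕ → A) (n : ℕ) {N : ℕ} (α : Fin (N+1) → A) (h h' : Fin (N+1) → ℕ) : Prop :=
  IsET E n α h ∧ IsET E n α h' ∧ OccLex h h' ∧
    ¬ ∃ g, IsET E n α g ∧ OccLex h g ∧ OccLex g h'

/-- `h1 <⋆ h2` are non-interleaved: `h2 (v_j) ≥ h1 (v_{j+1})` for all `j < N`. -/
def NonInterleaved {N : ℕ} (h1 h2 : Fin (N+1) → ℕ) : Prop :=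
  ∀ i : Fin N, h1 i.succ ≤ h2 i.castSucc

/-- Non-overlapped occurrences: one ends strictly before the other begins. -/
def NonOverlapped {N : ℕ} (h1 h2 : Fin (N+1) → ℕ) : Prop :=
  h1 (Fin.last N) < h2 0 ∨ h2 (Fin.last N) < h1 0

/-- Minimal-occurrence frequency: the number of minimal windows. -/
noncomputable def fmi (E : ℕ → A) (n : ℕ) {N : ℕ} (α : Fin (N+1) → A) : ℕ :=
  {p : ℕ × ℕ | IsMinWindow E n α p.1 p.2}.ncard

/-- Non-interleaved frequency: the maximum cardinality of a pairwise
non-interleaved set of occurrences. -/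
noncomputable def fni (E : ℕ → A) (n : ℕ) {N : ℕ} (α : Fin (N+1) → A) : ℕ :=
  sSup {m | ∃ S : Set (Fin (N+1) → ℕ), S.Finite ∧ S.ncard = m ∧
    (∀ h ∈ S, IsOcc E n α h) ∧
    S.Pairwise (fun a b => NonInterleaved a b ∨ NonInterleaved b a)}

/-- Non-overlapped frequency: the maximum cardinality of a pairwise
non-overlapped set of occurrences. -/
noncomputable def fno (E : ℕ → A) (n : ℕ) {N : ℕ} (α : Fin (N+1) → A) : ℕ :=
  sSup {m | ∃ S : Set (Fin (N+1) → ℕ), S.Finite ∧ S.ncard = m ∧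
    (∀ h ∈ S, IsOcc E n α h) ∧ S.Pairwise NonOverlapped}

/-- Distinct-occurrences frequency: the maximum cardinality of a set of
occurrences no two of which share two or more events. -/
noncomputable def fd (E : ℕ → A) (n : ℕ) {N : ℕ} (α : Fin (N+1) → A) : ℕ :=
  sSup {m | ∃ S : Set (Fin (N+1) → ℕ), S.Finite ∧ S.ncard = m ∧
    (∀ h ∈ S, IsOcc E n α h) ∧
    S.Pairwise (fun a b => (Set.range a ∩ Set.range b).ncard ≤ 1)}


lemma exists_minWindow (E : ℕ → A) (n : ℕ) {N : ℕ} (α : Fin (N+1) → A) :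
    ∀ w a b, b - a ≤ w → WindowHasOcc E n α a b →
      ∃ c d, a ≤ c ∧ d ≤ b ∧ IsMinWindow E n α c d := by
  intro w
  induction w using Nat.strong_induction_on with
  | _ w ih =>
    intro a b hw hocc
    by_cases hmin : ∀ c d, a ≤ c → d ≤ b → (a < c ∨ d < b) → ¬ WindowHasOcc E n α c d
    · exact ⟨a, b, le_refl _, le_refl _, hocc, hmin⟩
    · push_neg at hmin
      obtain ⟨c, d, hac, hdb, hlt, hcd⟩ := hmin
      obtain ⟨h, hoc, h0, hl⟩ := hcd
      have hcd' : c ≤ d := le_trans h0 (le_trans (hoc.1.monotone (Fin.zero_le _)) hl)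
      have hsub : d - c < w := by omega
      obtain ⟨c', d', h1, h2, h3⟩ := ih (d - c) hsub c d le_rfl ⟨h, hoc, h0, hl⟩
      exact ⟨c', d', le_trans hac h1, le_trans h2 hdb, h3⟩

lemma minWindow_lt (E : ℕ → A) (n : ℕ) {N : ℕ} (α : Fin (N+1) → A) {a b : ℕ}
    (hm : IsMinWindow E n α a b) : a < n ∧ b < n := by
  obtain ⟨⟨h, hoc, h0, hl⟩, hmin⟩ := hm
  have hab : a = h 0 ∧ b = h (Fin.last N) := by
    by_contra hc
    have : a < h 0 ∨ h (Fin.last N) < b := by omega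
    exact hmin (h 0) (h (Fin.last N)) h0 hl this ⟨h, hoc, le_rfl, le_rfl⟩
  exact ⟨hab.1 ▸ hoc.2.1 0, hab.2 ▸ hoc.2.1 (Fin.last N)⟩

lemma minWindow_le (E : ℕ → A) (n : ℕ) {N : ℕ} (α : Fin (N+1) → A) {a b : ℕ}
    (hm : IsMinWindow E n α a b) : a ≤ b := by
  obtain ⟨⟨h, hoc, h0, hl⟩, -⟩ := hm
  exact le_trans h0 (le_trans (hoc.1.monotone (Fin.zero_le _)) hl)

theorem stmt7 (E : ℕ → A) (n : ℕ) {N : ℕ} (α : Fin (N+1) → A) :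
    fno E n α ≤ fmi E n α := by
  have hMWfin : {p : ℕ × ℕ | IsMinWindow E n α p.1 p.2}.Finite := by
    apply Set.Finite.subset ((Set.finite_Iio n).prod (Set.finite_Iio n))
    rintro ⟨a, b⟩ hm
    exact ⟨(minWindow_lt E n α hm).1, (minWindow_lt E n α hm).2⟩
  unfold fno fmi
  apply csSup_le
  · exact ⟨0, ∅, Set.finite_empty, Set.ncard_empty _, fun h hh => absurd hh (Set.notMem_empty h), Set.pairwise_empty _⟩
  · rintro m ⟨S, hfin, hcard, hocc, hpair⟩
    have key : ∀ h : Fin (N+1) → ℕ, ∃ p : ℕ × ℕ, h ∈ S →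
        h 0 ≤ p.1 ∧ p.2 ≤ h (Fin.last N) ∧ IsMinWindow E n α p.1 p.2 := by
      intro h
      by_cases hS : h ∈ S
      · obtain ⟨c, d, h1, h2, h3⟩ := exists_minWindow E n α (h (Fin.last N) - h 0)
          (h 0) (h (Fin.last N)) le_rfl ⟨h, hocc h hS, le_rfl, le_rfl⟩
        exact ⟨(c, d), fun _ => ⟨h1, h2, h3⟩⟩
      · exact ⟨(0, 0), fun hh => absurd hh hS⟩
    choose f hf using key
    have hinj : Set.InjOn f S := by
      intro h1 h1S h2 h2S heq
      by_contra hne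
      have hf1 := hf h1 h1S
      have hf2 := hf h2 h2S
      rcases hpair h1S h2S hne with hno | hno
      · have hle := minWindow_le E n α hf2.2.2
        have : (f h1).2 < (f h2).2 :=
          lt_of_le_of_lt hf1.2.1 (lt_of_lt_of_le hno (le_trans hf2.1 hle))
        rw [heq] at this; exact lt_irrefl _ this
      · have hle := minWindow_le E n α hf1.2.2
        have : (f h2).2 < (f h1).2 :=
          lt_of_le_of_lt hf2.2.1 (lt_of_lt_of_le hno (le_trans hf1.1 hle))
        rw [heq] at this; exact lt_irrefl _ this
    have hsub : f '' S ⊆ {p : ℕ × ℕ | IsMinWindow E n α p.1 p.2} := by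
      rintro p ⟨h, hS, rfl⟩
      exact (hf h hS).2.2
    calc m = S.ncard := hcard.symm
      _ = (f '' S).ncard := (Set.ncard_image_of_injOn hinj).symm
      _ ≤ _ := Set.ncard_le_ncard hsub hMWfin
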